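/- Let K be a compact metric space and f : K → ℝ a bounded function. Then f is a difference of bounded semicontinuous functions (f ∈ D(K)) if and only if the positive transfinite oscillation v_α f is a bounded function for every countable ordinal α; moreover, when this holds there exists a countable ordinal α with v_α f = v_{α+1} f. -/

import Mathlib

open Filter Topology

section DKdefs
variable {K : Type*} [MetricSpace K] [CompactSpace K]

/-- A bounded lower semicontinuous real function. -/
def BddLSC (u : K → ℝ) : Prop := LowerSemicontinuous u ∧ ∃ M : ℝ, ∀ x, |u x| ≤ M

/-- `f ∈ D(K)`: `f = (u₁ - u₂) + i(u₃ - u₄)` with the `uᵢ` bounded lower semicontinuous. -/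
def MemDK (f : K → ℂ) : Prop :=
  ∃ u₁ u₂ u₃ u₄ : K → ℝ, BddLSC u₁ ∧ BddLSC u₂ ∧ BddLSC u₃ ∧ BddLSC u₄ ∧
    ∀ x, f x = ((u₁ x - u₂ x : ℝ) : ℂ) + Complex.I * ((u₃ x - u₄ x : ℝ) : ℂ)

/-- `f ∈ D(K)` for real `f`: a difference of bounded lower semicontinuous functions. -/
def MemDKReal (f : K → ℝ) : Prop :=
  ∃ u₁ u₂ : K → ℝ, BddLSC u₁ ∧ BddLSC u₂ ∧ ∀ x, f x = u₁ x - u₂ x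

/-- Upper semicontinuous envelope `Ug(x) = limsup_{y → x} g(y)` (non-exclusive limsup). -/
noncomputable def uscEnv (g : K → EReal) : K → EReal := fun x => limsup g (𝓝 x)

/-- The transfinite oscillations `osc_β f` of a complex-valued function. -/
noncomputable def oscOrd (f : K → ℂ) (β : Ordinal) : K → EReal :=
  Ordinal.limitRecOn β (fun _ => (0 : EReal))
    (fun _ ih => uscEnv fun x =>
      limsup (fun y => ((‖f y - f x‖ : ℝ) : EReal) + ih y) (𝓝 x))
    (fun β _ ih => uscEnv fun x => ⨆ (α : Ordinal) (h : α < β), ih α h x)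

/-- The transfinite oscillations `osc_β f` of a real-valued function. -/
noncomputable def oscOrdR (f : K → ℝ) (β : Ordinal) : K → EReal :=
  Ordinal.limitRecOn β (fun _ => (0 : EReal))
    (fun _ ih => uscEnv fun x =>
      limsup (fun y => ((|f y - f x| : ℝ) : EReal) + ih y) (𝓝 x))
    (fun β _ ih => uscEnv fun x => ⨆ (α : Ordinal) (h : α < β), ih α h x)

/-- The positive transfinite oscillations `v_β f` of a real-valued function
(as `osc_β`, but with `f y - f x` in place of `|f y - f x|`). -/
noncomputable def vOrd (f : K → ℝ) (β : Ordinal) : K → EReal :=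
  Ordinal.limitRecOn β (fun _ => (0 : EReal))
    (fun _ ih => uscEnv fun x =>
      limsup (fun y => ((f y - f x : ℝ) : EReal) + ih y) (𝓝 x))
    (fun β _ ih => uscEnv fun x => ⨆ (α : Ordinal) (h : α < β), ih α h x)

/-- The `D(K)`-norm of a real function: the infimum of `sup_{x} Σ_j |φ_j x|` over all
pointwise representations `f = Σ_j φ_j` with `φ_j` continuous. -/
noncomputable def DNorm (f : K → ℝ) : ℝ :=
  sInf {M : ℝ | ∃ φ : ℕ → K → ℝ, (∀ j, Continuous (φ j)) ∧
    (∀ x, HasSum (fun j => φ j x) (f x)) ∧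
    (∀ x, Summable fun j => |φ j x|) ∧ ∀ x, (∑' j, |φ j x|) ≤ M}

end DKdefs


section Helpers
variable {K : Type*} [MetricSpace K] [CompactSpace K]

omit [CompactSpace K] in
lemma le_limsup_nhds (g : K → EReal) (x : K) : g x ≤ limsup g (𝓝 x) :=
  Filter.le_limsup_of_frequently_le
    (Filter.frequently_iff.mpr fun hU => ⟨x, mem_of_mem_nhds hU, le_rfl⟩)

omit [CompactSpace K] in
lemma le_uscEnv (g : K → EReal) (x : K) : g x ≤ uscEnv g x := le_limsup_nhds g x

omit [CompactSpace K] in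
lemma uscEnv_lt {g : K → EReal} {x : K} {c : EReal} (h : uscEnv g x < c) :
    ∀ᶠ z in 𝓝 x, uscEnv g z < c := by
  obtain ⟨b, hb1, hb2⟩ := exists_between h
  have h1 : ∀ᶠ y in 𝓝 x, g y < b := Filter.eventually_lt_of_limsup_lt hb1
  obtain ⟨U, hU, hUo, hxU⟩ := eventually_nhds_iff.1 h1
  refine eventually_nhds_iff.2 ⟨U, fun z hz => ?_, hUo, hxU⟩
  have hev : ∀ᶠ y in 𝓝 z, g y ≤ b :=
    ((hUo.eventually_mem hz).mono fun y hy => (hU y hy).le)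
  exact lt_of_le_of_lt (Filter.limsup_le_of_le (by isBoundedDefault) hev) hb2

lemma ereal_le_coe_of_forall_eps {a : EReal} {t : ℝ}
    (h : ∀ ε : ℝ, 0 < ε → a ≤ ((t + ε : ℝ) : EReal)) : a ≤ (t : EReal) := by
  by_contra hc
  push_neg at hc
  obtain ⟨r, hr1, hr2⟩ := EReal.lt_iff_exists_real_btwn.1 hc
  have h3 := h (r - t) (sub_pos.2 (EReal.coe_lt_coe_iff.1 hr1))
  rw [show t + (r - t) = r by ring] at h3
  exact absurd (h3.trans_lt hr2) (lt_irrefl _)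

omit [CompactSpace K] in
lemma vOrd_zero (f : K → ℝ) : vOrd f 0 = fun _ => (0 : EReal) := by
  simp only [vOrd]
  rw [Ordinal.limitRecOn_zero]

omit [CompactSpace K] in
lemma vOrd_succ (f : K → ℝ) (α : Ordinal) :
    vOrd f (α + 1) =
      uscEnv (fun x => limsup (fun y => ((f y - f x : ℝ) : EReal) + vOrd f α y) (𝓝 x)) := by
  simp only [vOrd]
  rw [Ordinal.add_one_eq_succ, Ordinal.limitRecOn_succ]

omit [CompactSpace K] in
lemma vOrd_limit (f : K → ℝ) {β : Ordinal} (hβ : Order.IsSuccLimit β) :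
    vOrd f β = uscEnv (fun x => ⨆ (α : Ordinal) (_ : α < β), vOrd f α x) := by
  simp only [vOrd]
  rw [Ordinal.limitRecOn_limit _ _ _ _ hβ]

end Helpers

section Mono
variable {K : Type*} [MetricSpace K] [CompactSpace K]

omit [CompactSpace K] in
lemma vOrd_le_succ (f : K → ℝ) (α : Ordinal) (x : K) :
    vOrd f α x ≤ vOrd f (α + 1) x := by
  rw [vOrd_succ]
  refine le_trans ?_ (le_uscEnv _ x)
  refine le_trans ?_ (le_limsup_nhds (fun y => ((f y - f x : ℝ) : EReal) + vOrd f α y) x)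
  simp

omit [CompactSpace K] in
lemma vOrd_mono (f : K → ℝ) : ∀ β α : Ordinal, α ≤ β → ∀ x, vOrd f α x ≤ vOrd f β x := by
  intro β
  induction β using Ordinal.induction with
  | _ β IH =>
    intro α hαβ x
    rcases eq_or_lt_of_le hαβ with rfl | hlt
    · exact le_rfl
    rcases Ordinal.zero_or_succ_or_isSuccLimit β with h0 | ⟨γ, rfl⟩ | hlim
    · exact absurd (h0 ▸ hlt) (not_lt_of_ge (zero_le (a := α)))
    · have hαγ : α ≤ γ := Order.lt_succ_iff.1 hlt
      have h1 : vOrd f α x ≤ vOrd f γ x := IH γ (Order.lt_succ γ) α hαγ x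
      refine h1.trans ?_
      rw [← Ordinal.add_one_eq_succ]
      exact vOrd_le_succ f γ x
    · rw [vOrd_limit f hlim]
      refine le_trans ?_ (le_uscEnv _ x)
      exact le_iSup₂ (f := fun (α : Ordinal) (_ : α < β) => vOrd f α x) α hlt

omit [CompactSpace K] in
lemma vOrd_nonneg (f : K → ℝ) (α : Ordinal) (x : K) : (0 : EReal) ≤ vOrd f α x := by
  have := vOrd_mono f α 0 (zero_le (a := α)) x
  rwa [vOrd_zero] at this

omit [CompactSpace K] in
lemma vOrd_usc (f : K → ℝ) (α : Ordinal) {x : K} {c : EReal} (h : vOrd f α x < c) :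
    ∀ᶠ z in 𝓝 x, vOrd f α z < c := by
  rcases Ordinal.zero_or_succ_or_isSuccLimit α with rfl | ⟨γ, rfl⟩ | hlim
  · rw [vOrd_zero] at h ⊢
    exact Eventually.of_forall fun _ => h
  · rw [← Ordinal.add_one_eq_succ, vOrd_succ] at h ⊢
    exact uscEnv_lt h
  · rw [vOrd_limit f hlim] at h ⊢
    exact uscEnv_lt h

end Mono

section Forward
variable {K : Type*} [MetricSpace K] [CompactSpace K]

omit [CompactSpace K] in
/-- USC regularization of a bounded real function. -/
lemma usc_regularization {u : K → ℝ} {M : ℝ} (hM : ∀ x, |u x| ≤ M) :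
    ∃ w : K → ℝ, (∀ x, u x ≤ w x) ∧ (∀ x, w x ≤ M) ∧
      (∀ x, ∀ ε : ℝ, 0 < ε → ∀ᶠ y in 𝓝 x, w y < w x + ε) := by
  set U : K → EReal := uscEnv (fun x => ((u x : ℝ) : EReal)) with hU
  have hub : ∀ x, U x ≤ (M : EReal) := fun x =>
    Filter.limsup_le_of_le (by isBoundedDefault)
      (Eventually.of_forall fun y => EReal.coe_le_coe_iff.2 ((abs_le.1 (hM y)).2))
  have hlb : ∀ x, ((u x : ℝ) : EReal) ≤ U x := fun x => by
    rw [hU]; exact le_uscEnv (fun z => ((u z : ℝ) : EReal)) x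
  have hnt : ∀ x, U x ≠ ⊤ := fun x => ne_top_of_le_ne_top (EReal.coe_ne_top M) (hub x)
  have hnb : ∀ x, U x ≠ ⊥ := fun x =>
    ne_bot_of_le_ne_bot (EReal.coe_ne_bot (u x)) (hlb x)
  refine ⟨fun x => (U x).toReal, fun x => ?_, fun x => ?_, fun x ε hε => ?_⟩
  · have := hlb x
    rw [← EReal.coe_toReal (hnt x) (hnb x)] at this
    exact EReal.coe_le_coe_iff.1 this
  · have := hub x
    rw [← EReal.coe_toReal (hnt x) (hnb x)] at this
    exact EReal.coe_le_coe_iff.1 this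
  · have h1 : U x < (((U x).toReal + ε : ℝ) : EReal) := by
      rw [← EReal.coe_toReal (hnt x) (hnb x)]
      exact EReal.coe_lt_coe_iff.2 (by simp; linarith)
    refine (uscEnv_lt h1).mono fun y hy => ?_
    show (U y).toReal < (U x).toReal + ε
    rw [← hU] at hy
    rw [← EReal.coe_toReal (hnt y) (hnb y)] at hy
    exact EReal.coe_lt_coe_iff.1 hy

omit [CompactSpace K] in
/-- Key upper bound: `uscEnv g ≤ G` whenever `g ≤ G` pointwise and `G` is USC-ish. -/
lemma uscEnv_le_of_uscish {g : K → EReal} {G : K → ℝ}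
    (hG : ∀ x, ∀ ε : ℝ, 0 < ε → ∀ᶠ y in 𝓝 x, G y < G x + ε)
    (hle : ∀ z, g z ≤ (G z : EReal)) (x : K) : uscEnv g x ≤ (G x : EReal) := by
  refine ereal_le_coe_of_forall_eps fun ε hε => ?_
  refine Filter.limsup_le_of_le (by isBoundedDefault) ?_
  exact (hG x ε hε).mono fun y hy => (hle y).trans (EReal.coe_le_coe_iff.2 (by linarith))

omit [CompactSpace K] in
lemma vOrd_le_of_memDKReal {f : K → ℝ} (hmem : MemDKReal f) :
    ∃ M : ℝ, ∀ (α : Ordinal) (x : K), vOrd f α x ≤ (M : EReal) := by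
  obtain ⟨u₁, u₂, ⟨hl1, M₁, hM1⟩, ⟨hl2, M₂, hM2⟩, hrep⟩ := hmem
  obtain ⟨w₁, hw1u, hw1M, hw1usc⟩ := usc_regularization hM1
  obtain ⟨w₂, hw2u, hw2M, hw2usc⟩ := usc_regularization hM2
  set G : K → ℝ := fun x => w₁ x + w₂ x - u₁ x - u₂ x with hG
  have hGnn : ∀ x, 0 ≤ G x := fun x => by
    have := hw1u x; have := hw2u x; simp only [hG]; linarith
  have hGbd : ∀ x, G x ≤ 2 * (M₁ + M₂) := fun x => by
    have h1 := hw1M x; have h2 := hw2M x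
    have h3 := (abs_le.1 (hM1 x)).1; have h4 := (abs_le.1 (hM2 x)).1
    simp only [hG]; linarith
  have hGusc : ∀ x, ∀ ε : ℝ, 0 < ε → ∀ᶠ y in 𝓝 x, G y < G x + ε := by
    intro x ε hε
    have e1 := hw1usc x (ε/4) (by linarith)
    have e2 := hw2usc x (ε/4) (by linarith)
    have e3 := hl1 x (u₁ x - ε/4) (by linarith)
    have e4 := hl2 x (u₂ x - ε/4) (by linarith)
    filter_upwards [e1, e2, e3, e4] with y h1 h2 h3 h4
    simp only [hG]; linarith
  have main : ∀ (α : Ordinal) (x : K), vOrd f α x ≤ ((G x : ℝ) : EReal) := by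
    intro α
    induction α using Ordinal.induction with
    | _ α IH =>
      rcases Ordinal.zero_or_succ_or_isSuccLimit α with rfl | ⟨γ, rfl⟩ | hlim
      · intro x
        rw [vOrd_zero]
        show (0 : EReal) ≤ ((G x : ℝ) : EReal)
        exact_mod_cast hGnn x
      · rw [← Ordinal.add_one_eq_succ, vOrd_succ]
        refine uscEnv_le_of_uscish hGusc (fun z => ?_)
        refine ereal_le_coe_of_forall_eps fun ε hε => ?_
        refine Filter.limsup_le_of_le (by isBoundedDefault) ?_
        have e1 := hw1usc z (ε/4) (by linarith)
        have e2 := hw2usc z (ε/4) (by linarith)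
        have e4 := hl2 z (u₂ z - ε/4) (by linarith)
        filter_upwards [e1, e2, e4] with y h1 h2 h4
        have hIH := IH γ (Order.lt_succ γ) y
        calc ((f y - f z : ℝ) : EReal) + vOrd f γ y
            ≤ ((f y - f z : ℝ) : EReal) + ((G y : ℝ) : EReal) := add_le_add_right hIH _
          _ = (((f y - f z) + G y : ℝ) : EReal) := (EReal.coe_add _ _).symm
          _ ≤ ((G z + ε : ℝ) : EReal) := by
              refine EReal.coe_le_coe_iff.2 ?_
              have hfy := hrep y; have hfz := hrep z
              simp only [hG] at *
              linarith
      · rw [vOrd_limit f hlim]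
        refine uscEnv_le_of_uscish hGusc (fun z => ?_)
        exact iSup₂_le fun γ hγ => IH γ hγ z
  exact ⟨2 * (M₁ + M₂), fun α x =>
    (main α x).trans (EReal.coe_le_coe_iff.2 (hGbd x))⟩

end Forward

section Stab
variable {K : Type*} [MetricSpace K] [CompactSpace K]

universe v in
lemma exists_vOrd_fixed (f : K → ℝ) :
    ∃ α : Ordinal.{v}, α < (Cardinal.aleph 1).ord ∧ vOrd f α = vOrd f (α + 1) := by
  by_contra hcon
  push_neg at hcon
  have key : ∀ α : Ordinal, α < (Cardinal.aleph 1).ord →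
      ∃ (B : Set K) (q : ℚ) (x : K), B ∈ TopologicalSpace.countableBasis K ∧ x ∈ B ∧
        (∀ z ∈ B, vOrd f α z < ((q : ℝ) : EReal)) ∧
        ¬ vOrd f (α + 1) x < ((q : ℝ) : EReal) := by
    intro α hα
    have hne := hcon α hα
    have hex : ∃ x, vOrd f α x < vOrd f (α + 1) x := by
      by_contra hex
      push_neg at hex
      exact hne (funext fun x => le_antisymm (vOrd_le_succ f α x) (hex x))
    obtain ⟨x, hx⟩ := hex
    obtain ⟨q, hq1, hq2⟩ := EReal.exists_rat_btwn_of_lt hx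
    have hVopen : IsOpen {z | vOrd f α z < ((q : ℝ) : EReal)} := by
      rw [isOpen_iff_mem_nhds]
      intro z hz
      exact vOrd_usc f α hz
    obtain ⟨B, hB, hxB, hBsub⟩ :=
      (TopologicalSpace.isBasis_countableBasis K).exists_subset_of_mem_open hq1 hVopen
    exact ⟨B, q, x, hB, hxB, fun z hz => hBsub hz, not_lt.2 hq2.le⟩
  choose B q xs hB hxB hBlt hnot using key
  haveI countB : Countable ↥(TopologicalSpace.countableBasis K) :=
    (TopologicalSpace.countable_countableBasis K).to_subtype
  let φ : Set.Iio ((Cardinal.aleph 1).ord) → ↥(TopologicalSpace.countableBasis K) × ℚ :=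
    fun a => (⟨B a.1 a.2, hB a.1 a.2⟩, q a.1 a.2)
  have main : ∀ (b b' : Set.Iio ((Cardinal.aleph 1).ord)), b.1 < b'.1 → φ b = φ b' → False := by
    intro b b' hlt heq'
    have hBeq : B b.1 b.2 = B b'.1 b'.2 := congrArg (fun p => (p.1 : Set K)) heq'
    have hqeq : q b.1 b.2 = q b'.1 b'.2 := congrArg Prod.snd heq'
    have hx' : xs b.1 b.2 ∈ B b'.1 b'.2 := hBeq ▸ hxB b.1 b.2
    have h5 : vOrd f b'.1 (xs b.1 b.2) < (((q b.1 b.2 : ℚ) : ℝ) : EReal) := by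
      rw [hqeq]; exact hBlt b'.1 b'.2 _ hx'
    have h6 : b.1 + 1 ≤ b'.1 := by
      rw [Ordinal.add_one_eq_succ]; exact Order.succ_le_of_lt hlt
    exact hnot b.1 b.2 (lt_of_le_of_lt (vOrd_mono f b'.1 (b.1 + 1) h6 _) h5)
  have hinj : Function.Injective φ := by
    intro a a' heq
    by_contra hne2
    have hne3 : a.1 ≠ a'.1 := fun h => hne2 (Subtype.ext h)
    rcases lt_or_gt_of_ne hne3 with h | h
    · exact main a a' h heq
    · exact main a' a h heq.symm
  have hcount : Countable (Set.Iio ((Cardinal.aleph 1).ord)) := hinj.countable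
  have h1 : Cardinal.mk (Set.Iio ((Cardinal.aleph 1).ord)) ≤ Cardinal.aleph0 :=
    Cardinal.mk_le_aleph0_iff.2 hcount
  rw [Ordinal.mk_Iio_ordinal, Cardinal.card_ord] at h1
  rw [← Cardinal.lift_aleph0.{v + 1, v}, Cardinal.lift_le] at h1
  exact absurd h1 (not_le.2 Cardinal.aleph0_lt_aleph_one)

end Stab

section Reverse
variable {K : Type*} [MetricSpace K] [CompactSpace K]

omit [CompactSpace K] in
lemma memDKReal_of_fixed {f : K → ℝ} (hf : ∃ Mf : ℝ, ∀ x, |f x| ≤ Mf) {α : Ordinal} {M : ℝ}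
    (hfix : vOrd f α = vOrd f (α + 1)) (hbd : ∀ x, vOrd f α x ≤ (M : EReal)) :
    MemDKReal f := by
  obtain ⟨Mf, hMf⟩ := hf
  have hnn : ∀ x, (0 : EReal) ≤ vOrd f α x := vOrd_nonneg f α
  have hnt : ∀ x, vOrd f α x ≠ ⊤ := fun x => ne_top_of_le_ne_top (EReal.coe_ne_top M) (hbd x)
  have hnb : ∀ x, vOrd f α x ≠ ⊥ := fun x =>
    ne_bot_of_le_ne_bot (EReal.coe_ne_bot 0) (by exact_mod_cast hnn x)
  set V : K → ℝ := fun x => (vOrd f α x).toReal with hV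
  have hVcoe : ∀ x, ((V x : ℝ) : EReal) = vOrd f α x := fun x =>
    EReal.coe_toReal (hnt x) (hnb x)
  have hV0 : ∀ x, 0 ≤ V x := fun x => by
    have := hnn x; rw [← hVcoe x] at this; exact_mod_cast this
  have hVM : ∀ x, V x ≤ |M| := fun x => by
    have := hbd x; rw [← hVcoe x] at this
    exact le_trans (EReal.coe_le_coe_iff.1 this) (le_abs_self M)
  -- the inner function at the fixed point
  have hg : ∀ x, limsup (fun y => ((f y - f x : ℝ) : EReal) + vOrd f α y) (𝓝 x)
      = vOrd f α x := by
    intro x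
    refine le_antisymm ?_ ?_
    · have h1 : limsup (fun y => ((f y - f x : ℝ) : EReal) + vOrd f α y) (𝓝 x)
          ≤ vOrd f (α + 1) x := by
        rw [vOrd_succ]
        exact le_uscEnv (fun z =>
          limsup (fun y => ((f y - f z : ℝ) : EReal) + vOrd f α y) (𝓝 z)) x
      rwa [← hfix] at h1
    · refine le_trans ?_
        (le_limsup_nhds (fun y => ((f y - f x : ℝ) : EReal) + vOrd f α y) x)
      simp
  refine ⟨fun x => -V x, fun x => -(f x + V x), ⟨?_, |M|, fun x => ?_⟩,
    ⟨?_, Mf + |M|, fun x => ?_⟩, fun x => by ring⟩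
  · -- LSC of -V
    intro x c hc
    have hc' : c < -V x := hc
    have h1 : vOrd f α x < ((-c : ℝ) : EReal) := by
      rw [← hVcoe x]
      exact EReal.coe_lt_coe_iff.2 (by linarith)
    refine (vOrd_usc f α h1).mono fun z hz => ?_
    rw [← hVcoe z] at hz
    have h2 := EReal.coe_lt_coe_iff.1 hz
    show c < -V z
    linarith
  · show |(-V x : ℝ)| ≤ |M|
    rw [abs_neg, abs_of_nonneg (hV0 x)]
    exact hVM x
  · -- LSC of -(f + V)
    intro x c hc
    have hc' : c < -(f x + V x) := hc
    have h1 : limsup (fun y => ((f y - f x : ℝ) : EReal) + vOrd f α y) (𝓝 x)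
        < ((-c - f x : ℝ) : EReal) := by
      rw [hg x, ← hVcoe x]
      exact EReal.coe_lt_coe_iff.2 (by linarith)
    refine (Filter.eventually_lt_of_limsup_lt h1).mono fun y hy => ?_
    rw [← hVcoe y, ← EReal.coe_add] at hy
    have h2 := EReal.coe_lt_coe_iff.1 hy
    show c < -(f y + V y)
    linarith
  · show |(-(f x + V x) : ℝ)| ≤ Mf + |M|
    have h1 := abs_le.1 (hMf x)
    rw [abs_neg, abs_le]
    constructor
    · linarith [hV0 x, h1.1, abs_nonneg M]
    · linarith [hVM x, h1.2]

end Reverse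


/-- A bounded real `f` is a difference of bounded semicontinuous functions iff the
positive transfinite oscillation `v_α f` is a bounded function for every countable
ordinal `α`; moreover in that case `v_α f = v_{α+1} f` for some countable `α`. -/
theorem memDKReal_iff_vOrd_bounded {K : Type*} [MetricSpace K] [CompactSpace K]
    (f : K → ℝ) (hf : ∃ M : ℝ, ∀ x, |f x| ≤ M) :
    (MemDKReal f ↔
      ∀ α : Ordinal, α < (Cardinal.aleph 1).ord →
        ∃ M : ℝ, ∀ x, vOrd f α x ≤ (M : EReal)) ∧
    (MemDKReal f →
      ∃ α : Ordinal, α < (Cardinal.aleph 1).ord ∧ vOrd f α = vOrd f (α + 1)) := by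
  constructor
  · constructor
    · intro hmem α _
      obtain ⟨M, hM⟩ := vOrd_le_of_memDKReal hmem
      exact ⟨M, hM α⟩
    · intro hbdd
      obtain ⟨α, hα, hfix⟩ := exists_vOrd_fixed f
      obtain ⟨M, hM⟩ := hbdd α hα
      exact memDKReal_of_fixed hf hfix hM
  · intro _
    exact exists_vOrd_fixed f
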